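/- For all $u, v, x, y$ in the field $\mathbb{Q}_3$ of $3$-adic numbers, if $\tfrac{5}{96}(25u^2 - 4uv + 52v^2) = \tfrac{1}{8}(5x^2 + 8y^2)$ then $u = v = x = y = 0$. -/

import Mathlib

private lemma toZMod_eq_zero_iff' (z : ℤ_[3]) : PadicInt.toZMod z = 0 ↔ ‖z‖ < 1 := by
  rw [← RingHom.mem_ker, PadicInt.ker_toZMod, PadicInt.maximalIdeal_eq_span_p,
    Ideal.mem_span_singleton, ← PadicInt.norm_lt_one_iff_dvd]

private lemma key_res (c : ℤ_[3]) (hc : PadicInt.toZMod c = 1) (t : ℤ_[3]) (ht : ‖t‖ = 1) :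
    ‖c * t ^ 2 - 1‖ < 1 := by
  rw [← toZMod_eq_zero_iff']
  have htz : PadicInt.toZMod t ≠ 0 := by
    rw [Ne, toZMod_eq_zero_iff']; simp [ht]
  have h2 : (PadicInt.toZMod t) ^ 2 = 1 := by
    revert htz; generalize PadicInt.toZMod t = a; revert a; decide
  rw [map_sub, map_mul, map_pow, hc, h2, map_one]
  ring

private lemma norm_three : ‖(3:ℚ_[3])‖ = (3:ℝ)⁻¹ := by
  have := Padic.norm_p (p := 3); simpa using this

private lemma norm_one_add (ε : ℚ_[3]) (hε : ‖ε‖ < 1) : ‖1 + ε‖ = 1 := by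
  rw [Padic.add_eq_max_of_ne (by simp; linarith)]
  simp [le_of_lt hε]

private lemma norm_two' : ‖(2:ℚ_[3])‖ = 1 := by
  have h1 : ‖((2:ℤ):ℚ_[3])‖ ≤ 1 := Padic.norm_int_le_one 2
  have h2 : ¬ ‖((2:ℤ):ℚ_[3])‖ < 1 := by
    rw [Padic.norm_intCast_lt_one_iff]; decide
  push_cast at h1 h2
  linarith [lt_or_eq_of_le h1]

/-- "good" elements of `ℚ_[3]`: zero, or of even valuation with unit part of residue `1`. -/
private def GoodP (z : ℚ_[3]) : Prop :=
  z = 0 ∨ ∃ (n : ℤ) (ε : ℚ_[3]), ‖ε‖ < 1 ∧ z = (3:ℚ_[3])^(2*n) * (1+ε)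

private lemma norm_3zpow (n : ℤ) : ‖(3:ℚ_[3])^n‖ = (3:ℝ)^(-n) := by
  rw [norm_zpow, norm_three, inv_zpow, ← zpow_neg]

private lemma good_coeff_sq (d : ℤ) (c : ℤ_[3]) (hc : PadicInt.toZMod c = 1)
    (y : ℚ_[3]) : GoodP ((3:ℚ_[3])^(2*d) * (c : ℚ_[3]) * y^2) := by
  rcases eq_or_ne y 0 with hy | hy
  · left; simp [hy]
  · right
    set m := y.valuation with hm
    have hy3 : ‖y‖ = (3:ℝ)^(-m) := by
      have := Padic.norm_eq_zpow_neg_valuation hy; rw [← hm] at this; simpa using this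
    set t : ℚ_[3] := (3:ℚ_[3])^(-m) * y with htdef
    have ht : ‖t‖ = 1 := by
      rw [htdef, norm_mul, norm_3zpow, hy3, neg_neg, ← zpow_add₀ (by norm_num : (3:ℝ) ≠ 0)]
      simp
    have ht1 : ‖t‖ ≤ 1 := le_of_eq ht
    set t' : ℤ_[3] := ⟨t, ht1⟩ with ht'def
    have ht' : ‖t'‖ = 1 := ht
    have hkey := key_res c hc t' ht'
    refine ⟨d + m, ((c * t'^2 - 1 : ℤ_[3]) : ℚ_[3]), ?_, ?_⟩
    · rwa [← PadicInt.norm_def]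
    · have hcast : ((c * t'^2 - 1 : ℤ_[3]) : ℚ_[3]) = (c:ℚ_[3]) * t^2 - 1 := by
        rfl
      rw [hcast]
      have h3 : (3:ℚ_[3]) ≠ 0 := by norm_num
      have hyt : y = (3:ℚ_[3])^m * t := by
        rw [htdef, ← mul_assoc, ← zpow_add₀ h3]; simp
      rw [hyt]
      rw [mul_pow, ← zpow_natCast ((3:ℚ_[3])^m) 2, ← zpow_mul]
      rw [show (1 + ((c:ℚ_[3]) * t^2 - 1)) = (c:ℚ_[3]) * t^2 by ring]
      rw [show (2*(d+m)) = 2*d + m*(2:ℤ) by ring, zpow_add₀ h3]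
      ring

private lemma norm_of_rep (n : ℤ) (ε : ℚ_[3]) (hε : ‖ε‖ < 1) :
    ‖(3:ℚ_[3])^(2*n) * (1+ε)‖ = (3:ℝ)^(-(2*n)) := by
  rw [norm_mul, norm_3zpow, norm_one_add ε hε, mul_one]

private lemma good_add_aux (m n : ℤ) (hmn : m ≤ n) (ε₁ ε₂ : ℚ_[3])
    (h1 : ‖ε₁‖ < 1) (h2 : ‖ε₂‖ < 1) :
    ∃ k : ℤ, ‖(3:ℚ_[3])^(2*m) * (1+ε₁) + (3:ℚ_[3])^(2*n) * (1+ε₂)‖ = (3:ℝ)^(2*k) := by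
  have h3 : (3:ℚ_[3]) ≠ 0 := by norm_num
  have hsplit : (3:ℚ_[3])^(2*n) = (3:ℚ_[3])^(2*m) * (3:ℚ_[3])^(2*(n-m)) := by
    rw [← zpow_add₀ h3]; ring_nf
  have hfac : (3:ℚ_[3])^(2*m) * (1+ε₁) + (3:ℚ_[3])^(2*n) * (1+ε₂)
      = (3:ℚ_[3])^(2*m) * ((1+ε₁) + (3:ℚ_[3])^(2*(n-m)) * (1+ε₂)) := by
    rw [hsplit]; ring
  refine ⟨-m, ?_⟩
  rw [hfac, norm_mul, norm_3zpow]
  have hinner : ‖(1+ε₁) + (3:ℚ_[3])^(2*(n-m)) * (1+ε₂)‖ = 1 := by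
    rcases eq_or_lt_of_le hmn with heq | hlt
    · subst heq
      have : (1+ε₁) + (3:ℚ_[3])^(2*(m-m)) * (1+ε₂) = 2 + (ε₁ + ε₂) := by
        simp; ring
      rw [this, Padic.add_eq_max_of_ne, norm_two', max_eq_left]
      · have := Padic.nonarchimedean (q := ε₁) (r := ε₂)
        have hlt1 : ‖ε₁ + ε₂‖ < 1 := lt_of_le_of_lt this (by simp [h1, h2])
        linarith
      · have := Padic.nonarchimedean (q := ε₁) (r := ε₂)
        have hlt1 : ‖ε₁ + ε₂‖ < 1 := lt_of_le_of_lt this (by simp [h1, h2])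
        rw [norm_two']; linarith
    · have hw : ‖(3:ℚ_[3])^(2*(n-m)) * (1+ε₂)‖ < 1 := by
        rw [norm_mul, norm_3zpow, norm_one_add ε₂ h2, mul_one]
        apply zpow_lt_one_of_neg₀ (by norm_num : (1:ℝ) < 3)
        omega
      have hsmall : ‖ε₁ + (3:ℚ_[3])^(2*(n-m)) * (1+ε₂)‖ < 1 := by
        have := Padic.nonarchimedean (q := ε₁) (r := (3:ℚ_[3])^(2*(n-m)) * (1+ε₂))
        exact lt_of_le_of_lt this (max_lt h1 hw)
      rw [add_assoc]
      exact norm_one_add _ hsmall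
  rw [hinner, mul_one]
  ring_nf

private lemma good_add (a b : ℚ_[3]) (ha : GoodP a) (hb : GoodP b) :
    (a = 0 ∧ b = 0) ∨ (a + b ≠ 0 ∧ ∃ k : ℤ, ‖a + b‖ = (3:ℝ)^(2*k)) := by
  have hpos : ∀ k : ℤ, (0:ℝ) < (3:ℝ)^k := fun k => zpow_pos (by norm_num) k
  have hne : ∀ z : ℚ_[3], ∀ k : ℤ, ‖z‖ = (3:ℝ)^(2*k) → z ≠ 0 := by
    intro z k hk h0
    rw [h0, norm_zero] at hk
    exact absurd hk.symm (ne_of_gt (hpos _))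
  rcases ha with ha0 | ⟨m, ε₁, h1, rfl⟩
  · rcases hb with hb0 | ⟨n, ε₂, h2, rfl⟩
    · exact Or.inl ⟨ha0, hb0⟩
    · subst ha0
      right
      have hk : ‖(0:ℚ_[3]) + (3:ℚ_[3])^(2*n) * (1+ε₂)‖ = (3:ℝ)^(2*(-n)) := by
        rw [zero_add, norm_of_rep n ε₂ h2]; ring_nf
      exact ⟨hne _ _ hk, ⟨-n, hk⟩⟩
  · rcases hb with hb0 | ⟨n, ε₂, h2, rfl⟩
    · subst hb0
      right
      have hk : ‖(3:ℚ_[3])^(2*m) * (1+ε₁) + 0‖ = (3:ℝ)^(2*(-m)) := by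
        rw [add_zero, norm_of_rep m ε₁ h1]; ring_nf
      exact ⟨hne _ _ hk, ⟨-m, hk⟩⟩
    · right
      rcases le_total m n with hmn | hnm
      · obtain ⟨k, hk⟩ := good_add_aux m n hmn ε₁ ε₂ h1 h2
        exact ⟨hne _ _ hk, ⟨k, hk⟩⟩
      · obtain ⟨k, hk⟩ := good_add_aux n m hnm ε₂ ε₁ h2 h1
        rw [add_comm] at hk
        exact ⟨hne _ _ hk, ⟨k, hk⟩⟩

private lemma toZMod_const (k : ℕ) (hk : (k : ZMod 3) = 1) :
    PadicInt.toZMod ((k : ℕ) : ℤ_[3]) = 1 := by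
  rw [map_natCast]; exact hk

/-- The quadratic form `(5/96)(25u² - 4uv + 52v²) - (1/8)(5x² + 8y²)` is anisotropic
over `ℚ₃`. -/
theorem Z103_form_anisotropic_over_Q3 :
    ∀ u v x y : ℚ_[3],
      (5/96 : ℚ_[3]) * (25*u^2 - 4*u*v + 52*v^2)
          = (1/8 : ℚ_[3]) * (5*x^2 + 8*y^2) →
        u = 0 ∧ v = 0 ∧ x = 0 ∧ y = 0 := by
  intro u v x y h
  have hs : (25*u-2*v)^2 + 1296*v^2 = 3*(100*x^2 + 160*y^2) := by
    linear_combination 480*h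
  have g1 : GoodP ((25*u-2*v)^2) := by
    have := good_coeff_sq 0 1 (by simpa using toZMod_const 1 (by decide)) (25*u-2*v)
    simpa using this
  have g2 : GoodP (1296*v^2) := by
    have := good_coeff_sq 2 ((16:ℕ):ℤ_[3]) (toZMod_const 16 (by decide)) v
    have e : (3:ℚ_[3])^(2*(2:ℤ)) * (((16:ℕ):ℤ_[3]) : ℚ_[3]) = 1296 := by
      rw [show (2*(2:ℤ)) = ((4:ℕ):ℤ) by norm_num, zpow_natCast]
      rw [PadicInt.coe_natCast, Nat.cast_ofNat]; norm_num
    rwa [e] at this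
  have g3 : GoodP (100*x^2) := by
    have := good_coeff_sq 0 ((100:ℕ):ℤ_[3]) (toZMod_const 100 (by decide)) x
    have e : (3:ℚ_[3])^(2*(0:ℤ)) * (((100:ℕ):ℤ_[3]) : ℚ_[3]) = 100 := by
      rw [PadicInt.coe_natCast, Nat.cast_ofNat]; norm_num
    rwa [e] at this
  have g4 : GoodP (160*y^2) := by
    have := good_coeff_sq 0 ((160:ℕ):ℤ_[3]) (toZMod_const 160 (by decide)) y
    have e : (3:ℚ_[3])^(2*(0:ℤ)) * (((160:ℕ):ℤ_[3]) : ℚ_[3]) = 160 := by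
      rw [PadicInt.coe_natCast, Nat.cast_ofNat]; norm_num
    rwa [e] at this
  have hL := good_add _ _ g1 g2
  have hR := good_add _ _ g3 g4
  have extractL : (25*u-2*v)^2 = 0 ∧ 1296*v^2 = 0 → u = 0 ∧ v = 0 := by
    rintro ⟨e1, e2⟩
    have hv : v = 0 := by
      have := mul_eq_zero.mp e2
      rcases this with h' | h'
      · exact absurd h' (by norm_num)
      · exact pow_eq_zero_iff (by norm_num) |>.mp h'
    have hsz : 25*u - 2*v = 0 := pow_eq_zero_iff (by norm_num) |>.mp e1
    rw [hv] at hsz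
    constructor
    · have : (25:ℚ_[3]) * u = 0 := by linear_combination hsz
      rcases mul_eq_zero.mp this with h' | h'
      · exact absurd h' (by norm_num)
      · exact h'
    · exact hv
  have extractR : 100*x^2 = 0 ∧ 160*y^2 = 0 → x = 0 ∧ y = 0 := by
    rintro ⟨e1, e2⟩
    constructor
    · rcases mul_eq_zero.mp e1 with h' | h'
      · exact absurd h' (by norm_num)
      · exact pow_eq_zero_iff (by norm_num) |>.mp h'
    · rcases mul_eq_zero.mp e2 with h' | h'
      · exact absurd h' (by norm_num)
      · exact pow_eq_zero_iff (by norm_num) |>.mp h'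
  rcases hR with ⟨hx0, hy0⟩ | ⟨hRne, j, hj⟩
  · obtain ⟨hx, hy⟩ := extractR ⟨hx0, hy0⟩
    have hL0 : (25*u-2*v)^2 + 1296*v^2 = 0 := by
      rw [hs, hx0, hy0]; ring
    rcases hL with ⟨ha, hb⟩ | ⟨hLne, _⟩
    · obtain ⟨hu, hv⟩ := extractL ⟨ha, hb⟩
      exact ⟨hu, hv, hx, hy⟩
    · exact absurd hL0 hLne
  · exfalso
    have hLne : (25*u-2*v)^2 + 1296*v^2 ≠ 0 := by
      rw [hs]
      exact mul_ne_zero (by norm_num) hRne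
    rcases hL with ⟨ha, hb⟩ | ⟨_, k, hk⟩
    · exact hLne (by rw [ha, hb]; ring)
    · have hnorm : ‖(25*u-2*v)^2 + 1296*v^2‖ = (3:ℝ)^(2*j-1) := by
        rw [hs, norm_mul, norm_three, hj]
        rw [show ((3:ℝ)⁻¹) = (3:ℝ)^(-1:ℤ) by norm_num]
        rw [← zpow_add₀ (by norm_num : (3:ℝ) ≠ 0)]
        ring_nf
      rw [hk] at hnorm
      exact absurd (zpow_right_injective₀ (by norm_num) (by norm_num) hnorm) (by omega)
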